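/- arXiv:2009.09964 — 5 statements merged into one kernel-verified Lean document; each statement's English description precedes it below -/
import Mathlib

section
/- Let p and q be tracks such that range(h_p) and range(h_q) have no common straight line segment, and let (s,t) be an intersection of p and q with intersection point x. If the alternation condition defining a crossing holds for one admissible radius δ (i.e. δ > 0 such that B(x,δ)∖{x} contains no vertex of p and no vertex of q), then it holds for every admissible radius δ' with 0 < δ' < δ. Hence the definition of a crossing does not depend on the choice of the radius. -/
noncomputable section

abbrev Plane := EuclideanSpace ℝ (Fin 2)

def pt (a b : ℝ) : Plane := WithLp.toLp 2 ![a, b]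

def unitSquare : Set Plane := {z | z 0 ∈ Set.Icc (0:ℝ) 1 ∧ z 1 ∈ Set.Icc (0:ℝ) 1}

structure Track where
  k : ℕ
  s : ℕ → ℝ
  x : ℕ → Plane
  mono : ∀ i < k, s i < s (i + 1)
  ne : ∀ i < k, x i ≠ x (i + 1)

def Track.seg (p : Track) (t : ℝ) : ℕ := sSup {i | i < p.k ∧ p.s i ≤ t}

def Track.path (p : Track) (t : ℝ) : Plane :=
  p.x (p.seg t) + ((t - p.s (p.seg t)) / (p.s (p.seg t + 1) - p.s (p.seg t))) •
    (p.x (p.seg t + 1) - p.x (p.seg t))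

def Track.rangeSet (p : Track) : Set Plane := p.path '' Set.Icc (p.s 0) (p.s p.k)

def Track.V (p : Track) : Set Plane := {z | ∃ i ≤ p.k, z = p.x i}

def line (x y : Plane) : Set Plane := (affineSpan ℝ {x, y} : Set Plane)

def Track.L (p : Track) : Set Plane := {z | ∃ i < p.k, z ∈ line (p.x i) (p.x (i + 1))}

def Track.Lbar (p : Track) : Set Plane :=
  {z | ∃ i ≤ p.k, ∃ j ≤ p.k, p.x i ≠ p.x j ∧ z ∈ line (p.x i) (p.x j)}

def IsSegSet (S : Set Plane) : Prop := ∃ x y : Plane, x ≠ y ∧ S = segment ℝ x y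

def NoCommonSegment (p q : Track) : Prop :=
  ¬ ∃ S : Set Plane, IsSegSet S ∧ S ⊆ p.rangeSet ∧ S ⊆ q.rangeSet

def WSep (p q : Track) : Prop := p.V ∩ q.L = ∅ ∧ q.V ∩ p.L = ∅

def IsInter (p q : Track) (s t : ℝ) : Prop :=
  p.s 0 < s ∧ s < p.s p.k ∧ q.s 0 < t ∧ t < q.s q.k ∧ p.path s = q.path t

def Admissible (p q : Track) (x : Plane) (δ : ℝ) : Prop :=
  0 < δ ∧ ∀ v ∈ p.V ∪ q.V, v ∈ Metric.ball x δ → v = x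

def entryParam (p : Track) (s δ : ℝ) (x : Plane) : ℝ :=
  sInf {s' | s' < s ∧ p.path '' Set.Icc s' s ⊆ Metric.ball x δ}

def exitParam (p : Track) (s δ : ℝ) (x : Plane) : ℝ :=
  sSup {s' | s < s' ∧ p.path '' Set.Icc s s' ⊆ Metric.ball x δ}

def Alternates (x : Plane) (δ : ℝ) (a b c d : Plane) : Prop :=
  c ∈ Metric.sphere x δ \ {a, b} ∧ d ∈ Metric.sphere x δ \ {a, b} ∧
  connectedComponentIn (Metric.sphere x δ \ {a, b}) c ≠
    connectedComponentIn (Metric.sphere x δ \ {a, b}) d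

def CrossAt (p q : Track) (s t δ : ℝ) : Prop :=
  Alternates (p.path s) δ
    (p.path (entryParam p s δ (p.path s))) (p.path (exitParam p s δ (p.path s)))
    (q.path (entryParam q t δ (p.path s))) (q.path (exitParam q t δ (p.path s)))

def IsCrossing (p q : Track) (s t : ℝ) : Prop :=
  IsInter p q s t ∧ ∃ δ : ℝ, Admissible p q (p.path s) δ ∧ CrossAt p q s t δ

def CN (p q : Track) : ℕ := {st : ℝ × ℝ | IsCrossing p q st.1 st.2}.ncard

def par (p q : Track) : ℕ := CN p q % 2

def ds (A B : Set Plane) : ℝ := sInf {r | ∃ a ∈ A, ∃ b ∈ B, r = ‖a - b‖}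

def alphaIJ (f g : ℝ → Plane) (aI bI aJ bJ : ℝ) : ℝ :=
  min (ds {f aI, f bI} (g '' Set.Icc aJ bJ)) (ds {g aJ, g bJ} (f '' Set.Icc aI bI))

def IsModulus2 (f g : ℝ → Plane) (md : ℕ → ℕ) : Prop :=
  Monotone md ∧ ∀ n : ℕ, ∀ t ∈ Set.Icc (-1:ℝ) 2, ∀ t' ∈ Set.Icc (-1:ℝ) 2,
    |t - t'| < (2:ℝ) ^ (-(md n : ℤ)) →
    ‖f t - f t'‖ < (2:ℝ) ^ (-(n : ℤ)) ∧ ‖g t - g t'‖ < (2:ℝ) ^ (-(n : ℤ))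

def IsApprox (f : ℝ → Plane) (md : ℕ → ℕ) (a b : ℝ) (n : ℕ) (p : Track) : Prop :=
  p.s 0 = a ∧ p.s p.k = b ∧
  (∀ i < p.k, p.s (i + 1) - p.s i < (2:ℝ) ^ (-(md n : ℤ))) ∧
  (∀ i ≤ p.k, ‖f (p.s i) - p.x i‖ < (2:ℝ) ^ (-(n : ℤ)))

def ParityIs (f g : ℝ → Plane) (md : ℕ → ℕ) (aI bI aJ bJ : ℝ) (b : ℕ) : Prop :=
  ∀ n : ℕ, (2:ℝ) ^ (-(n : ℤ)) < alphaIJ f g aI bI aJ bJ / 16 →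
    ∀ p q : Track, IsApprox f md aI bI n p → IsApprox g md aJ bJ n q → WSep p q →
      par p q = b

def IsModulus1 (f : ℝ → Plane) (md : ℕ → ℕ) : Prop :=
  Monotone md ∧ ∀ n : ℕ, ∀ t ∈ Set.Icc (-1:ℝ) 2, ∀ t' ∈ Set.Icc (-1:ℝ) 2,
    |t - t'| < (2:ℝ) ^ (-(md n : ℤ)) → ‖f t - f t'‖ < (2:ℝ) ^ (-(n : ℤ))

def nbhdU (A : Set Plane) (δ : ℝ) : Set Plane := {x | ∃ y ∈ A, ‖x - y‖ < δ}

def extF (φ : ℝ → Plane) (t : ℝ) : Plane :=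
  if t ≤ 0 then pt t 0 else if t ≤ 1 then φ t else pt t 1

def extG (ψ : ℝ → Plane) (t : ℝ) : Plane :=
  if t ≤ 0 then pt t 1 else if t ≤ 1 then ψ t else pt t 0

namespace Track

lemma s_lt_s (p : Track) {i j : ℕ} (hij : i < j) (hj : j ≤ p.k) : p.s i < p.s j := by
  induction j with
  | zero => omega
  | succ n ih =>
    rcases Nat.lt_succ_iff_lt_or_eq.mp hij with h | h
    · exact lt_trans (ih h (by omega)) (p.mono n (by omega))
    · subst h; exact p.mono i (by omega)

lemma s_le_s (p : Track) {i j : ℕ} (hij : i ≤ j) (hj : j ≤ p.k) : p.s i ≤ p.s j := by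
  rcases eq_or_lt_of_le hij with h | h
  · subst h; exact le_refl _
  · exact (p.s_lt_s h hj).le

lemma seg_eq (p : Track) {i : ℕ} {t : ℝ} (hik : i < p.k) (h1 : p.s i ≤ t)
    (h2 : ∀ j, j < p.k → p.s j ≤ t → j ≤ i) : p.seg t = i := by
  have hmem : i ∈ {j | j < p.k ∧ p.s j ≤ t} := ⟨hik, h1⟩
  have hbdd : BddAbove {j | j < p.k ∧ p.s j ≤ t} := ⟨i, fun j hj => h2 j hj.1 hj.2⟩
  exact le_antisymm (csSup_le ⟨i, hmem⟩ (fun j hj => h2 j hj.1 hj.2)) (le_csSup hbdd hmem)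

lemma seg_eq_zero_of_lt (p : Track) {t : ℝ} (h : t < p.s 0) : p.seg t = 0 := by
  have h0 : {j | j < p.k ∧ p.s j ≤ t} = ∅ := by
    ext j
    simp only [Set.mem_setOf_eq, Set.mem_empty_iff_false, iff_false, not_and, not_le]
    intro hj
    exact lt_of_lt_of_le h (p.s_le_s (Nat.zero_le j) hj.le)
  rw [Track.seg, h0]
  exact csSup_empty

/-- the affine piece -/
def F (p : Track) (i : ℕ) (t : ℝ) : Plane :=
  p.x i + ((t - p.s i) / (p.s (i + 1) - p.s i)) • (p.x (i + 1) - p.x i)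

lemma path_eq_F (p : Track) {i : ℕ} {t : ℝ} (hik : i < p.k)
    (h1 : i = 0 ∨ p.s i ≤ t) (h2 : i + 1 = p.k ∨ t ≤ p.s (i + 1)) :
    p.path t = p.F i t := by
  by_cases hti : p.s i ≤ t
  · by_cases ht2 : t < p.s (i + 1)
    · have hseg : p.seg t = i := by
        refine p.seg_eq hik hti (fun j hj hjt => ?_)
        by_contra hc
        push_neg at hc
        exact absurd (le_trans (p.s_le_s hc hj.le) hjt) (not_le.mpr ht2)
      rw [Track.path, hseg]; rfl
    · push_neg at ht2
      by_cases hik2 : i + 1 < p.k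
      case neg =>
        have hseg : p.seg t = i := p.seg_eq hik hti (fun j hj _ => by omega)
        rw [Track.path, hseg]; rfl
      case pos =>
        have hteq : t = p.s (i + 1) := by
          rcases h2 with h2 | h2
          · omega
          · exact le_antisymm h2 ht2
        have hseg : p.seg t = i + 1 := by
          refine p.seg_eq hik2 (by rw [hteq]) (fun j hj hjt => ?_)
          by_contra hc
          push_neg at hc
          have := p.s_lt_s (show i + 1 < j by omega) hj.le
          rw [← hteq] at this
          exact absurd hjt (not_le.mpr this)
        have hd : p.s (i + 1) - p.s i ≠ 0 := sub_ne_zero.mpr (p.mono i hik).ne'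
        rw [Track.path, hseg, hteq, Track.F]
        rw [sub_self, zero_div, zero_smul, add_zero, div_self hd, one_smul]
        abel
  · rcases h1 with h1 | h1
    · subst h1
      have hseg : p.seg t = 0 := p.seg_eq_zero_of_lt (by push_neg at hti; exact hti)
      rw [Track.path, hseg]; rfl
    · exact absurd h1 hti

lemma path_vertex (p : Track) {i : ℕ} (hik : i ≤ p.k) : p.path (p.s i) = p.x i := by
  rcases Nat.lt_or_ge i p.k with h | h
  · rw [p.path_eq_F h (Or.inr le_rfl) (Or.inr (p.mono i h).le), Track.F,
      sub_self, zero_div, zero_smul, add_zero]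
  · have hik' : i = p.k := le_antisymm hik h
    subst hik'
    rcases Nat.eq_zero_or_pos p.k with hk | hk
    · rw [Track.path]
      have : p.seg (p.s p.k) = 0 := by
        have h0 : {j | j < p.k ∧ p.s j ≤ p.s p.k} = ∅ := by
          ext j; simp [hk]
        rw [Track.seg, h0]; exact csSup_empty
      rw [this, hk, sub_self, zero_div, zero_smul, add_zero]
    · have hk1 : p.k - 1 < p.k := by omega
      have := p.path_eq_F hk1 (Or.inr (p.s_le_s (by omega) le_rfl))
        (Or.inl (by omega))
      have hkk : p.k - 1 + 1 = p.k := by omega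
      rw [this, Track.F, hkk]
      have hd : p.s p.k - p.s (p.k - 1) ≠ 0 := by
        have := p.s_lt_s hk1 le_rfl
        exact sub_ne_zero.mpr this.ne'
      rw [div_self hd, one_smul]
      abel

lemma left_piece (p : Track) (hk : 0 < p.k) (u : ℝ) :
    ∃ i, i < p.k ∧ ∃ ε > 0, ∀ r, u - ε ≤ r → r ≤ u → p.path r = p.F i r := by
  by_cases hT : {j | j < p.k ∧ p.s j < u}.Nonempty
  · set T := {j | j < p.k ∧ p.s j < u} with hTdef
    have hbdd : BddAbove T := ⟨p.k, fun j hj => hj.1.le⟩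
    have hi : sSup T ∈ T := Nat.sSup_mem hT hbdd
    refine ⟨sSup T, hi.1, u - p.s (sSup T), by linarith [hi.2], fun r h1 h2 => ?_⟩
    refine p.path_eq_F hi.1 (Or.inr (by linarith)) ?_
    by_cases h3 : sSup T + 1 < p.k
    · right
      have hnm : sSup T + 1 ∉ T := fun hc => by
        have := le_csSup hbdd hc; omega
      have : ¬ p.s (sSup T + 1) < u := fun hc => hnm ⟨h3, hc⟩
      linarith [not_lt.mp this]
    · left; have := hi.1; omega
  · have hall : ∀ j, j < p.k → u ≤ p.s j := by
      intro j hj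
      by_contra hc
      exact hT ⟨j, hj, not_le.mp hc⟩
    refine ⟨0, hk, 1, one_pos, fun r h1 h2 => ?_⟩
    refine p.path_eq_F hk (Or.inl rfl) ?_
    by_cases h3 : 1 < p.k
    · exact Or.inr (le_trans h2 (hall 1 h3))
    · left; omega

lemma right_piece (p : Track) (hk : 0 < p.k) (u : ℝ) :
    ∃ i, i < p.k ∧ ∃ ε > 0, ∀ r, u ≤ r → r ≤ u + ε → p.path r = p.F i r := by
  by_cases hT : {j | j < p.k ∧ u < p.s j}.Nonempty
  · set T := {j | j < p.k ∧ u < p.s j} with hTdef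
    have hj0 : sInf T ∈ T := Nat.sInf_mem hT
    rcases Nat.eq_zero_or_pos (sInf T) with h0 | h0
    · rw [h0] at hj0
      refine ⟨0, hk, p.s 0 - u, by linarith [hj0.2], fun r h1 h2 => ?_⟩
      refine p.path_eq_F hk (Or.inl rfl) ?_
      by_cases h3 : 1 < p.k
      · have h4 := p.s_le_s (show (0:ℕ) ≤ 1 by omega) h3.le
        exact Or.inr (by linarith)
      · left; omega
    · obtain ⟨m, hm⟩ : ∃ m, sInf T = m + 1 := ⟨sInf T - 1, by omega⟩
      have hmk : m < p.k := by have := hj0.1; omega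
      have hmn : m ∉ T := fun hc => by have := Nat.sInf_le hc; omega
      have hsm : p.s m ≤ u := by
        by_contra hc
        exact hmn ⟨hmk, not_le.mp hc⟩
      rw [hm] at hj0
      refine ⟨m, hmk, p.s (m + 1) - u, by linarith [hj0.2], fun r h1 h2 => ?_⟩
      exact p.path_eq_F hmk (Or.inr (le_trans hsm h1)) (Or.inr (by linarith))
  · have hall : ∀ j, j < p.k → p.s j ≤ u := by
      intro j hj
      by_contra hc
      exact hT ⟨j, hj, not_le.mp hc⟩
    refine ⟨p.k - 1, by omega, 1, one_pos, fun r h1 h2 => ?_⟩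
    refine p.path_eq_F (by omega) (Or.inr (le_trans (hall _ (by omega)) h1)) (Or.inl (by omega))

lemma F_sub (p : Track) (i : ℕ) (r u : ℝ) :
    p.F i r - p.F i u = ((r - u) / (p.s (i + 1) - p.s i)) • (p.x (i + 1) - p.x i) := by
  simp only [F, add_sub_add_left_eq_sub, ← sub_smul, div_sub_div_same,
    sub_sub_sub_cancel_right]

lemma escape_below (p : Track) (hk : 0 < p.k) (x : Plane) (δ : ℝ) :
    ∃ B : ℝ, ∀ r, ‖p.path r - x‖ < δ → B ≤ r := by
  by_cases hδ : 0 < δ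
  case neg =>
    exact ⟨0, fun r hr => absurd hr (by push_neg at hδ ⊢; exact le_trans hδ (norm_nonneg _))⟩
  have hd : 0 < p.s 1 - p.s 0 := sub_pos.mpr (p.mono 0 hk)
  have hc : 0 < ‖p.x 1 - p.x 0‖ := norm_pos_iff.mpr (sub_ne_zero.mpr (p.ne 0 hk).symm)
  set d := p.s 1 - p.s 0 with hddef
  set c := ‖p.x 1 - p.x 0‖ with hcdef
  refine ⟨p.s 0 - (δ + ‖p.x 0 - x‖) * d / c, fun r hr => ?_⟩
  by_contra hcon
  push_neg at hcon
  have hr0 : r < p.s 0 := by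
    have h1 : 0 < (δ + ‖p.x 0 - x‖) * d / c := by positivity
    linarith
  have hpath : p.path r = p.F 0 r :=
    p.path_eq_F hk (Or.inl rfl) (Or.inr (by linarith))
  have hsplit : ((r - p.s 0) / d) • (p.x 1 - p.x 0) = (p.path r - x) - (p.x 0 - x) := by
    rw [hpath, Track.F]
    abel
  have hnorm : ‖((r - p.s 0) / d) • (p.x 1 - p.x 0)‖ = ((p.s 0 - r) / d) * c := by
    rw [norm_smul, Real.norm_eq_abs, abs_div, abs_of_pos hd, abs_of_neg (by linarith : r - p.s 0 < 0)]
    ring_nf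
    rw [hcdef]
  have hle : ((p.s 0 - r) / d) * c ≤ ‖p.path r - x‖ + ‖p.x 0 - x‖ := by
    rw [← hnorm, hsplit]
    exact norm_sub_le _ _
  have h1 : ((p.s 0 - r) / d) * c < δ + ‖p.x 0 - x‖ := by linarith
  rw [div_mul_eq_mul_div, div_lt_iff₀ hd] at h1
  have h5 : p.s 0 - r < (δ + ‖p.x 0 - x‖) * d / c := (lt_div_iff₀ hc).mpr h1
  linarith

lemma escape_above (p : Track) (hk : 0 < p.k) (x : Plane) (δ : ℝ) :
    ∃ B : ℝ, ∀ r, ‖p.path r - x‖ < δ → r ≤ B := by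
  by_cases hδ : 0 < δ
  case neg =>
    exact ⟨0, fun r hr => absurd hr (by push_neg at hδ ⊢; exact le_trans hδ (norm_nonneg _))⟩
  obtain ⟨m, hm⟩ : ∃ m, p.k = m + 1 := ⟨p.k - 1, by omega⟩
  have hmk : m < p.k := by omega
  have hd : 0 < p.s (m + 1) - p.s m := sub_pos.mpr (p.mono m hmk)
  have hc : 0 < ‖p.x (m + 1) - p.x m‖ := norm_pos_iff.mpr (sub_ne_zero.mpr (p.ne m hmk).symm)
  set d := p.s (m + 1) - p.s m with hddef
  set c := ‖p.x (m + 1) - p.x m‖ with hcdef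
  refine ⟨p.s m + (δ + ‖p.x m - x‖) * d / c, fun r hr => ?_⟩
  by_contra hcon
  push_neg at hcon
  have hr0 : p.s m < r := by
    have h1 : 0 < (δ + ‖p.x m - x‖) * d / c := by positivity
    linarith
  have hpath : p.path r = p.F m r :=
    p.path_eq_F hmk (Or.inr hr0.le) (Or.inl hm.symm)
  have hsplit : ((r - p.s m) / d) • (p.x (m + 1) - p.x m) = (p.path r - x) - (p.x m - x) := by
    rw [hpath, Track.F]
    abel
  have hnorm : ‖((r - p.s m) / d) • (p.x (m + 1) - p.x m)‖ = ((r - p.s m) / d) * c := by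
    rw [norm_smul, Real.norm_eq_abs, abs_div, abs_of_pos hd, abs_of_pos (by linarith : 0 < r - p.s m)]
  have hle : ((r - p.s m) / d) * c ≤ ‖p.path r - x‖ + ‖p.x m - x‖ := by
    rw [← hnorm, hsplit]
    exact norm_sub_le _ _
  have h1 : ((r - p.s m) / d) * c < δ + ‖p.x m - x‖ := by linarith
  rw [div_mul_eq_mul_div, div_lt_iff₀ hd] at h1
  have h5 : r - p.s m < (δ + ‖p.x m - x‖) * d / c := (lt_div_iff₀ hc).mpr h1
  linarith

end Track

set_option maxHeartbeats 1000000 in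
lemma entry_spec (p : Track) (s : ℝ) (x : Plane) (δ δ' : ℝ) (hx : p.path s = x)
    (hs0 : p.s 0 < s) (hsk : s < p.s p.k) (hδ'0 : 0 < δ') (hle : δ' ≤ δ)
    (hV : ∀ j, j ≤ p.k → p.x j ∈ Metric.ball x δ → p.x j = x) :
    ‖p.path (entryParam p s δ x) - x‖ = δ ∧
      p.path (entryParam p s δ' x) = x + (δ' / δ) • (p.path (entryParam p s δ x) - x) := by
  have hδ0 : 0 < δ := lt_of_lt_of_le hδ'0 hle
  have hk : 0 < p.k := by
    rcases Nat.eq_zero_or_pos p.k with h | h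
    · rw [h] at hsk; linarith
    · exact h
  -- characterization of membership
  have hchar : ∀ ρ r : ℝ, (r < s ∧ p.path '' Set.Icc r s ⊆ Metric.ball x ρ) ↔
      (r < s ∧ ∀ u, r ≤ u → u ≤ s → ‖p.path u - x‖ < ρ) := by
    intro ρ r
    constructor
    · rintro ⟨h1, h2⟩
      refine ⟨h1, fun u hu1 hu2 => ?_⟩
      have := h2 ⟨u, ⟨hu1, hu2⟩, rfl⟩
      rwa [Metric.mem_ball, dist_eq_norm] at this
    · rintro ⟨h1, h2⟩
      refine ⟨h1, ?_⟩
      rintro z ⟨u, ⟨hu1, hu2⟩, rfl⟩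
      rw [Metric.mem_ball, dist_eq_norm]
      exact h2 u hu1 hu2
  set S : Set ℝ := {s' | s' < s ∧ p.path '' Set.Icc s' s ⊆ Metric.ball x δ} with hS
  have hmemS : ∀ r : ℝ, r ∈ S ↔ (r < s ∧ ∀ u, r ≤ u → u ≤ s → ‖p.path u - x‖ < δ) :=
    fun r => hchar δ r
  -- S is nonempty
  obtain ⟨i0, hi0k, ε0, hε0, hp0⟩ := p.left_piece hk s
  have hd0 : 0 < p.s (i0 + 1) - p.s i0 := sub_pos.mpr (p.mono i0 hi0k)
  have hc0 : 0 < ‖p.x (i0 + 1) - p.x i0‖ := norm_pos_iff.mpr (sub_ne_zero.mpr (p.ne i0 hi0k).symm)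
  set d0 := p.s (i0 + 1) - p.s i0 with hd0def
  set c0 := ‖p.x (i0 + 1) - p.x i0‖ with hc0def
  set ε1 := min ε0 (δ * d0 / (2 * c0)) with hε1def
  have hε1 : 0 < ε1 := lt_min hε0 (by positivity)
  have hmem1 : s - ε1 ∈ S := by
    rw [hmemS]
    refine ⟨by linarith, fun u hu1 hu2 => ?_⟩
    have hε1a : ε1 ≤ ε0 := min_le_left _ _
    have hpu : p.path u = p.F i0 u := hp0 u (by linarith) hu2
    have hnu : ‖p.path u - x‖ = ((s - u) / d0) * c0 := by
      rw [hpu, ← hx, hp0 s (by linarith) le_rfl, Track.F_sub, norm_smul, Real.norm_eq_abs,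
        abs_div, abs_of_pos hd0, abs_of_nonpos (by linarith : u - s ≤ 0), neg_sub]
    rw [hnu]
    have h1 : (s - u) / d0 * c0 ≤ ε1 * c0 / d0 := by
      rw [div_mul_eq_mul_div, div_le_div_iff₀ hd0 hd0]
      have := mul_le_mul_of_nonneg_right
        (mul_le_mul_of_nonneg_right (show s - u ≤ ε1 by linarith) hc0.le) hd0.le
      linarith
    have h2 : ε1 * c0 / d0 ≤ δ / 2 := by
      rw [div_le_iff₀ hd0]
      have h3 : ε1 ≤ δ * d0 / (2 * c0) := min_le_right _ _
      rw [le_div_iff₀ (by positivity : (0:ℝ) < 2 * c0)] at h3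
      nlinarith
    linarith
  have hne : S.Nonempty := ⟨s - ε1, hmem1⟩
  -- S is bounded below
  obtain ⟨B, hB⟩ := p.escape_below hk x δ
  have hbdd : BddBelow S := by
    refine ⟨B, fun r hr => ?_⟩
    rw [hmemS] at hr
    exact hB r (hr.2 r le_rfl hr.1.le)
  set e := sInf S with he
  have he_le : e ≤ s - ε1 := csInf_le hbdd hmem1
  have he_lt : e < s := by linarith
  have hmem_gt : ∀ r, e < r → r < s → r ∈ S := by
    intro r h1 h2
    obtain ⟨r', hr'S, hr'lt⟩ := exists_lt_of_csInf_lt hne h1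
    rw [hmemS] at hr'S ⊢
    exact ⟨h2, fun u hu1 hu2 => hr'S.2 u (by linarith) hu2⟩
  have hball : ∀ r, e < r → r ≤ s → ‖p.path r - x‖ < δ := by
    intro r h1 h2
    rcases eq_or_lt_of_le h2 with h | h
    · rw [h, hx]; simpa using hδ0
    · exact ((hmemS r).mp (hmem_gt r h1 h)).2 r le_rfl h.le
  -- no vertex parameter in (e, s)
  have hvert : ∀ j, j ≤ p.k → ¬ (e < p.s j ∧ p.s j < s) := by
    intro j hj hcon
    set T := {j | j ≤ p.k ∧ e < p.s j ∧ p.s j < s} with hT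
    have hTne : T.Nonempty := ⟨j, hj, hcon.1, hcon.2⟩
    have hTbdd : BddAbove T := ⟨p.k, fun a ha => ha.1⟩
    have hj' : sSup T ∈ T := Nat.sSup_mem hTne hTbdd
    set j' := sSup T with hj'def
    have hj'x : p.x j' = x := by
      refine hV j' hj'.1 ?_
      rw [Metric.mem_ball, dist_eq_norm, ← p.path_vertex hj'.1]
      exact hball _ hj'.2.1 hj'.2.2.le
    have hj'k : j' < p.k := by
      rcases eq_or_lt_of_le hj'.1 with h | h
      · exfalso; have := hj'.2.2; rw [h] at this; linarith
      · exact h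
    have hs2 : s ≤ p.s (j' + 1) := by
      by_contra hc
      push_neg at hc
      have hmem : j' + 1 ∈ T :=
        ⟨hj'k, lt_trans hj'.2.1 (p.mono j' hj'k), hc⟩
      have := le_csSup hTbdd hmem
      omega
    have hpeq := p.path_eq_F hj'k (Or.inr hj'.2.2.le) (Or.inr hs2)
    rw [hx, Track.F, hj'x] at hpeq
    have hw : ((s - p.s j') / (p.s (j' + 1) - p.s j')) • (p.x (j' + 1) - x) = 0 := by
      rwa [left_eq_add] at hpeq
    rcases smul_eq_zero.mp hw with h | h
    · have hdne : p.s (j' + 1) - p.s j' ≠ 0 := sub_ne_zero.mpr (p.mono j' hj'k).ne'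
      rcases div_eq_zero_iff.mp h with h' | h'
      · have : s = p.s j' := by linarith [sub_eq_zero.mp h']
        linarith [hj'.2.2]
      · exact hdne (by linarith [sub_eq_zero.mp h'])
    · have := p.ne j' hj'k
      rw [hj'x] at this
      exact this (sub_eq_zero.mp h).symm
  -- single affine piece on [e, s]
  have hpieceEx : ∃ i, i < p.k ∧ ∀ r, e ≤ r → r ≤ s → p.path r = p.F i r := by
    by_cases hT : {j | j < p.k ∧ p.s j ≤ e}.Nonempty
    · set T := {j | j < p.k ∧ p.s j ≤ e} with hT2
      have hTbdd : BddAbove T := ⟨p.k, fun a ha => ha.1.le⟩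
      have hi : sSup T ∈ T := Nat.sSup_mem hT hTbdd
      refine ⟨sSup T, hi.1, fun r h1 h2 => p.path_eq_F hi.1 (Or.inr (le_trans hi.2 h1)) ?_⟩
      by_cases h3 : sSup T + 1 < p.k
      · right
        have hnm : sSup T + 1 ∉ T := fun hc => by
          have := le_csSup hTbdd hc; omega
        have h4 : e < p.s (sSup T + 1) := by
          by_contra hc; push_neg at hc; exact hnm ⟨h3, hc⟩
        have h5 := hvert (sSup T + 1) h3.le
        have h6 : ¬ p.s (sSup T + 1) < s := fun hc => h5 ⟨h4, hc⟩
        push_neg at h6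
        linarith
      · left; have := hi.1; omega
    · have hall : ∀ j, j < p.k → e < p.s j := by
        intro j hj
        by_contra hc
        exact hT ⟨j, hj, not_lt.mp hc⟩
      refine ⟨0, hk, fun r h1 h2 => p.path_eq_F hk (Or.inl rfl) ?_⟩
      by_cases h3 : 1 < p.k
      · right
        have h4 := hvert 1 h3.le
        have h5 : ¬ p.s 1 < s := fun hc => h4 ⟨hall 1 h3, hc⟩
        push_neg at h5
        linarith
      · left; omega
  obtain ⟨i, hik, hpiece⟩ := hpieceEx
  set a := p.path e with ha
  have hse : (0:ℝ) < s - e := by linarith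
  -- affine formula on [e, s]
  have haff : ∀ r, e ≤ r → r ≤ s → p.path r = x + ((s - r) / (s - e)) • (a - x) := by
    intro r h1 h2
    have h3 := hpiece r h1 h2
    have h4 := hpiece e le_rfl he_lt.le
    have h5 := hpiece s he_lt.le le_rfl
    rw [hx] at h5
    rw [h3, h5, ha, h4]
    have hFr := p.F_sub i r s
    have hFe := p.F_sub i e s
    have hd : 0 < p.s (i + 1) - p.s i := sub_pos.mpr (p.mono i hik)
    calc p.F i r = p.F i s + (p.F i r - p.F i s) := by abel
    _ = p.F i s + ((s - r) / (s - e)) • (p.F i e - p.F i s) := by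
        have h6 : s - e ≠ 0 := hse.ne'
        have h7 : p.s (i + 1) - p.s i ≠ 0 := hd.ne'
        have hsc : (s - r) / (s - e) * ((e - s) / (p.s (i + 1) - p.s i))
            = (r - s) / (p.s (i + 1) - p.s i) := by
          field_simp
          ring
        rw [hFr, hFe, smul_smul, hsc]
  have hnorm : ∀ r, e ≤ r → r ≤ s → ‖p.path r - x‖ = ((s - r) / (s - e)) * ‖a - x‖ := by
    intro r h1 h2
    rw [haff r h1 h2, add_sub_cancel_left, norm_smul, Real.norm_eq_abs,
      abs_of_nonneg (div_nonneg (by linarith) hse.le)]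
  -- the entry point lies on the sphere of radius δ
  have hgoal1 : ‖a - x‖ = δ := by
    rcases lt_trichotomy ‖a - x‖ δ with hcase | hcase | hcase
    · exfalso
      obtain ⟨i', hi'k, ε', hε', hp'⟩ := p.left_piece hk e
      have hd' : 0 < p.s (i' + 1) - p.s i' := sub_pos.mpr (p.mono i' hi'k)
      have hc' : 0 < ‖p.x (i' + 1) - p.x i'‖ :=
        norm_pos_iff.mpr (sub_ne_zero.mpr (p.ne i' hi'k).symm)
      set d' := p.s (i' + 1) - p.s i' with hd'def
      set c' := ‖p.x (i' + 1) - p.x i'‖ with hc'def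
      set ε2 := min ε' ((δ - ‖a - x‖) * d' / (2 * c')) with hε2def
      have hε2 : 0 < ε2 := by
        refine lt_min hε' (div_pos (mul_pos (by linarith) hd') (by positivity))
      have hmem2 : e - ε2 ∈ S := by
        rw [hmemS]
        refine ⟨by linarith, fun u hu1 hu2 => ?_⟩
        by_cases hu3 : u ≤ e
        · have hε2a : ε2 ≤ ε' := min_le_left _ _
          have hpu : p.path u = p.F i' u := hp' u (by linarith) hu3
          have hpe : p.path e = p.F i' e := hp' e (by linarith) le_rfl
          have hn1 : ‖p.path u - a‖ = ((e - u) / d') * c' := by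
            rw [ha, hpu, hpe, Track.F_sub, norm_smul, Real.norm_eq_abs, abs_div,
              abs_of_pos hd', abs_of_nonpos (by linarith : u - e ≤ 0), neg_sub]
          have hn2 : ‖p.path u - x‖ ≤ ‖p.path u - a‖ + ‖a - x‖ := by
            simpa [sub_add_sub_cancel] using norm_add_le (p.path u - a) (a - x)
          have h1 : (e - u) / d' * c' ≤ ε2 * c' / d' := by
            rw [div_mul_eq_mul_div, div_le_div_iff₀ hd' hd']
            have := mul_le_mul_of_nonneg_right
              (mul_le_mul_of_nonneg_right (show e - u ≤ ε2 by linarith) hc'.le) hd'.le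
            linarith
          have h2 : ε2 * c' / d' ≤ (δ - ‖a - x‖) / 2 := by
            rw [div_le_iff₀ hd']
            have h3 : ε2 ≤ (δ - ‖a - x‖) * d' / (2 * c') := min_le_right _ _
            rw [le_div_iff₀ (by positivity : (0:ℝ) < 2 * c')] at h3
            nlinarith
          rw [hn1] at hn2
          linarith
        · push_neg at hu3
          rw [hnorm u hu3.le hu2]
          have h1 : (s - u) / (s - e) ≤ 1 := by
            rw [div_le_one hse]
            linarith
          nlinarith [norm_nonneg (a - x)]
      have := csInf_le hbdd hmem2
      rw [← he] at this
      linarith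
    · exact hcase
    · exfalso
      have hax : (0:ℝ) < ‖a - x‖ := lt_trans hδ0 hcase
      set r := s - δ * (s - e) / ‖a - x‖ with hrdef
      have hr1 : e < r := by
        rw [hrdef]
        have h1 : δ * (s - e) / ‖a - x‖ < s - e := by
          rw [div_lt_iff₀ hax]
          nlinarith
        linarith
      have hr2 : r < s := by
        rw [hrdef]
        have : 0 < δ * (s - e) / ‖a - x‖ := by positivity
        linarith
      have hb := hball r hr1 hr2.le
      rw [hnorm r hr1.le hr2.le] at hb
      have : (s - r) / (s - e) * ‖a - x‖ = δ := by
        rw [hrdef]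
        field_simp
        ring
      linarith
  -- now the δ' entry point
  set e' := s - δ' / δ * (s - e) with he'def
  have hq : 0 < δ' / δ := by positivity
  have hq1 : δ' / δ ≤ 1 := by
    rw [div_le_one hδ0]; exact hle
  have he'1 : e ≤ e' := by
    rw [he'def]
    nlinarith
  have he'2 : e' < s := by
    rw [he'def]
    nlinarith
  set S' : Set ℝ := {s' | s' < s ∧ p.path '' Set.Icc s' s ⊆ Metric.ball x δ'} with hS'
  have hmemS' : ∀ r : ℝ, r ∈ S' ↔ (r < s ∧ ∀ u, r ≤ u → u ≤ s → ‖p.path u - x‖ < δ') :=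
    fun r => hchar δ' r
  have hS'sub : S' ⊆ S := by
    intro r hr
    rw [hmemS'] at hr
    rw [hmemS]
    exact ⟨hr.1, fun u h1 h2 => lt_of_lt_of_le (hr.2 u h1 h2) hle⟩
  have hkey : δ' * (s - e) = (s - e') * δ := by
    rw [he'def]
    field_simp
    ring
  have hmid : ∀ r, e' < r → r < s → r ∈ S' := by
    intro r hra hrb
    rw [hmemS']
    refine ⟨hrb, fun u hu1 hu2 => ?_⟩
    have hue : e ≤ u := le_trans (le_trans he'1 hra.le) hu1
    rw [hnorm u hue hu2, hgoal1]
    rw [div_mul_eq_mul_div, div_lt_iff₀ hse, hkey]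
    nlinarith
  have hmp : ∀ u v : ℝ, u < v → u < (u + v) / 2 ∧ (u + v) / 2 < v :=
    fun u v huv => ⟨by linarith, by linarith⟩
  have hS'ne : S'.Nonempty :=
    ⟨(e' + s) / 2, hmid ((e' + s) / 2) (hmp e' s he'2).1 (hmp e' s he'2).2⟩
  have hS'bdd : BddBelow S' := hbdd.mono hS'sub
  have hEge : e' ≤ sInf S' := by
    refine le_csInf hS'ne (fun r hr => ?_)
    by_contra hc
    push_neg at hc
    rcases le_or_gt e r with h1 | h1
    · have hrs : r < s := ((hmemS' r).mp hr).1
      have h2 := ((hmemS' r).mp hr).2 r le_rfl hrs.le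
      rw [hnorm r h1 hrs.le, hgoal1] at h2
      rw [div_mul_eq_mul_div, div_lt_iff₀ hse, hkey] at h2
      nlinarith
    · have := csInf_le hbdd (hS'sub hr)
      rw [← he] at this
      linarith
  have hEle : sInf S' ≤ e' := by
    by_contra hc
    push_neg at hc
    have h1 : e' < min s (sInf S') := lt_min he'2 hc
    obtain ⟨hr1, hr2⟩ := hmp _ _ h1
    have hrS := hmid _ hr1 (lt_of_lt_of_le hr2 (min_le_left _ _))
    have h3 := csInf_le hS'bdd hrS
    have h4 := lt_of_lt_of_le hr2 (min_le_right _ _)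
    linarith
  have hE : sInf S' = e' := le_antisymm hEle hEge
  constructor
  · show ‖p.path (sInf S) - x‖ = δ
    rw [← he, ← ha]
    exact hgoal1
  · show p.path (sInf S') = x + (δ' / δ) • (p.path (sInf S) - x)
    rw [hE, ← he, ← ha]
    rw [haff e' he'1 he'2.le]
    congr 2
    rw [he'def]
    field_simp
    ring

lemma Track.F_vertex (p : Track) {i : ℕ} (h : p.s i < p.s (i + 1)) :
    p.F i (p.s (i + 1)) = p.x (i + 1) := by
  rw [Track.F, div_self (sub_ne_zero.mpr h.ne'), one_smul]
  abel

set_option maxHeartbeats 1000000 in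
lemma exit_spec (p : Track) (s : ℝ) (x : Plane) (δ δ' : ℝ) (hx : p.path s = x)
    (hs0 : p.s 0 < s) (hsk : s < p.s p.k) (hδ'0 : 0 < δ') (hle : δ' ≤ δ)
    (hV : ∀ j, j ≤ p.k → p.x j ∈ Metric.ball x δ → p.x j = x) :
    ‖p.path (exitParam p s δ x) - x‖ = δ ∧
      p.path (exitParam p s δ' x) = x + (δ' / δ) • (p.path (exitParam p s δ x) - x) := by
  have hδ0 : 0 < δ := lt_of_lt_of_le hδ'0 hle
  have hk : 0 < p.k := by
    rcases Nat.eq_zero_or_pos p.k with h | h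
    · rw [h] at hsk; linarith
    · exact h
  have hchar : ∀ ρ r : ℝ, (s < r ∧ p.path '' Set.Icc s r ⊆ Metric.ball x ρ) ↔
      (s < r ∧ ∀ u, s ≤ u → u ≤ r → ‖p.path u - x‖ < ρ) := by
    intro ρ r
    constructor
    · rintro ⟨h1, h2⟩
      refine ⟨h1, fun u hu1 hu2 => ?_⟩
      have := h2 ⟨u, ⟨hu1, hu2⟩, rfl⟩
      rwa [Metric.mem_ball, dist_eq_norm] at this
    · rintro ⟨h1, h2⟩
      refine ⟨h1, ?_⟩
      rintro z ⟨u, ⟨hu1, hu2⟩, rfl⟩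
      rw [Metric.mem_ball, dist_eq_norm]
      exact h2 u hu1 hu2
  set S : Set ℝ := {s' | s < s' ∧ p.path '' Set.Icc s s' ⊆ Metric.ball x δ} with hS
  have hmemS : ∀ r : ℝ, r ∈ S ↔ (s < r ∧ ∀ u, s ≤ u → u ≤ r → ‖p.path u - x‖ < δ) :=
    fun r => hchar δ r
  -- S nonempty
  obtain ⟨i0, hi0k, ε0, hε0, hp0⟩ := p.right_piece hk s
  have hd0 : 0 < p.s (i0 + 1) - p.s i0 := sub_pos.mpr (p.mono i0 hi0k)
  have hc0 : 0 < ‖p.x (i0 + 1) - p.x i0‖ := norm_pos_iff.mpr (sub_ne_zero.mpr (p.ne i0 hi0k).symm)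
  set d0 := p.s (i0 + 1) - p.s i0 with hd0def
  set c0 := ‖p.x (i0 + 1) - p.x i0‖ with hc0def
  set ε1 := min ε0 (δ * d0 / (2 * c0)) with hε1def
  have hε1 : 0 < ε1 := lt_min hε0 (by positivity)
  have hmem1 : s + ε1 ∈ S := by
    rw [hmemS]
    refine ⟨by linarith, fun u hu1 hu2 => ?_⟩
    have hε1a : ε1 ≤ ε0 := min_le_left _ _
    have hpu : p.path u = p.F i0 u := hp0 u hu1 (by linarith)
    have hnu : ‖p.path u - x‖ = ((u - s) / d0) * c0 := by
      rw [hpu, ← hx, hp0 s le_rfl (by linarith), Track.F_sub, norm_smul, Real.norm_eq_abs,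
        abs_div, abs_of_pos hd0, abs_of_nonneg (by linarith : (0:ℝ) ≤ u - s)]
    rw [hnu]
    have h1 : (u - s) / d0 * c0 ≤ ε1 * c0 / d0 := by
      rw [div_mul_eq_mul_div, div_le_div_iff₀ hd0 hd0]
      have := mul_le_mul_of_nonneg_right
        (mul_le_mul_of_nonneg_right (show u - s ≤ ε1 by linarith) hc0.le) hd0.le
      linarith
    have h2 : ε1 * c0 / d0 ≤ δ / 2 := by
      rw [div_le_iff₀ hd0]
      have h3 : ε1 ≤ δ * d0 / (2 * c0) := min_le_right _ _
      rw [le_div_iff₀ (by positivity : (0:ℝ) < 2 * c0)] at h3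
      nlinarith
    linarith
  have hne : S.Nonempty := ⟨s + ε1, hmem1⟩
  obtain ⟨B, hB⟩ := p.escape_above hk x δ
  have hbdd : BddAbove S := by
    refine ⟨B, fun r hr => ?_⟩
    rw [hmemS] at hr
    exact hB r (hr.2 r hr.1.le le_rfl)
  set e := sSup S with he
  have he_ge : s + ε1 ≤ e := le_csSup hbdd hmem1
  have he_gt : s < e := by linarith
  have hmem_lt : ∀ r, s < r → r < e → r ∈ S := by
    intro r h1 h2
    obtain ⟨r', hr'S, hr'lt⟩ := exists_lt_of_lt_csSup hne h2
    rw [hmemS] at hr'S ⊢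
    exact ⟨h1, fun u hu1 hu2 => hr'S.2 u hu1 (by linarith)⟩
  have hball : ∀ r, s ≤ r → r < e → ‖p.path r - x‖ < δ := by
    intro r h1 h2
    rcases eq_or_lt_of_le h1 with h | h
    · rw [← h, hx]; simpa using hδ0
    · exact ((hmemS r).mp (hmem_lt r h h2)).2 r h.le le_rfl
  -- no vertex parameter in (s, e)
  have hvert : ∀ j, j ≤ p.k → ¬ (s < p.s j ∧ p.s j < e) := by
    intro j hj hcon
    set T := {j | j ≤ p.k ∧ s < p.s j ∧ p.s j < e} with hT
    have hTne : T.Nonempty := ⟨j, hj, hcon.1, hcon.2⟩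
    have hj' : sInf T ∈ T := Nat.sInf_mem hTne
    set j' := sInf T with hj'def
    have hj'x : p.x j' = x := by
      refine hV j' hj'.1 ?_
      rw [Metric.mem_ball, dist_eq_norm, ← p.path_vertex hj'.1]
      exact hball _ hj'.2.1.le hj'.2.2
    have hj'pos : 0 < j' := by
      rcases Nat.eq_zero_or_pos j' with h | h
      · exfalso; have := hj'.2.1; rw [h] at this; linarith
      · exact h
    obtain ⟨m, hm⟩ : ∃ m, j' = m + 1 := ⟨j' - 1, by omega⟩
    have hmk : m < p.k := by have := hj'.1; omega
    have hmnT : m ∉ T := fun hc => by have := Nat.sInf_le hc; omega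
    have hsm : p.s m ≤ s := by
      by_contra hc
      push_neg at hc
      refine hmnT ⟨by omega, hc, ?_⟩
      have : p.s m < p.s j' := p.s_lt_s (by omega) hj'.1
      linarith [hj'.2.2]
    have hd : 0 < p.s (m + 1) - p.s m := sub_pos.mpr (p.mono m hmk)
    have h5 : p.F m s = x := by
      rw [← p.path_eq_F hmk (Or.inr hsm) (Or.inr (by rw [← hm]; exact hj'.2.1.le)), hx]
    have h6 : p.F m (p.s (m + 1)) = x := by
      rw [p.F_vertex (p.mono m hmk), ← hm, hj'x]
    have h7 := p.F_sub m s (p.s (m + 1))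
    rw [h5, h6, sub_self] at h7
    rcases smul_eq_zero.mp h7.symm with h | h
    · rcases div_eq_zero_iff.mp h with h' | h'
      · have : s = p.s (m + 1) := by linarith [sub_eq_zero.mp h']
        rw [← hm] at this
        linarith [hj'.2.1]
      · linarith [sub_eq_zero.mp h']
    · exact (p.ne m hmk) (sub_eq_zero.mp h).symm
  -- single affine piece on [s, e]
  have hpieceEx : ∃ i, i < p.k ∧ ∀ r, s ≤ r → r ≤ e → p.path r = p.F i r := by
    have hT : {j | j < p.k ∧ p.s j ≤ s}.Nonempty := ⟨0, hk, hs0.le⟩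
    set T := {j | j < p.k ∧ p.s j ≤ s} with hT2
    have hTbdd : BddAbove T := ⟨p.k, fun a ha => ha.1.le⟩
    have hi : sSup T ∈ T := Nat.sSup_mem hT hTbdd
    refine ⟨sSup T, hi.1, fun r h1 h2 => p.path_eq_F hi.1 (Or.inr (le_trans hi.2 h1)) ?_⟩
    by_cases h3 : sSup T + 1 < p.k
    · right
      have hnm : sSup T + 1 ∉ T := fun hc => by
        have := le_csSup hTbdd hc; omega
      have h4 : s < p.s (sSup T + 1) := by
        by_contra hc; push_neg at hc; exact hnm ⟨h3, hc⟩
      have h5 := hvert (sSup T + 1) h3.le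
      have h6 : ¬ p.s (sSup T + 1) < e := fun hc => h5 ⟨h4, hc⟩
      push_neg at h6
      linarith
    · left; have := hi.1; omega
  obtain ⟨i, hik, hpiece⟩ := hpieceEx
  set b := p.path e with hb
  have hse : (0:ℝ) < e - s := by linarith
  have haff : ∀ r, s ≤ r → r ≤ e → p.path r = x + ((r - s) / (e - s)) • (b - x) := by
    intro r h1 h2
    have h3 := hpiece r h1 h2
    have h4 := hpiece e he_gt.le le_rfl
    have h5 := hpiece s le_rfl he_gt.le
    rw [hx] at h5
    rw [h3, h5, hb, h4]
    have hFr := p.F_sub i r s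
    have hFe := p.F_sub i e s
    have hd : 0 < p.s (i + 1) - p.s i := sub_pos.mpr (p.mono i hik)
    calc p.F i r = p.F i s + (p.F i r - p.F i s) := by abel
    _ = p.F i s + ((r - s) / (e - s)) • (p.F i e - p.F i s) := by
        have h6 : e - s ≠ 0 := hse.ne'
        have h7 : p.s (i + 1) - p.s i ≠ 0 := hd.ne'
        have hsc : (r - s) / (e - s) * ((e - s) / (p.s (i + 1) - p.s i))
            = (r - s) / (p.s (i + 1) - p.s i) := by
          field_simp
        rw [hFr, hFe, smul_smul, hsc]
  have hnorm : ∀ r, s ≤ r → r ≤ e → ‖p.path r - x‖ = ((r - s) / (e - s)) * ‖b - x‖ := by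
    intro r h1 h2
    rw [haff r h1 h2, add_sub_cancel_left, norm_smul, Real.norm_eq_abs,
      abs_of_nonneg (div_nonneg (by linarith) hse.le)]
  have hgoal1 : ‖b - x‖ = δ := by
    rcases lt_trichotomy ‖b - x‖ δ with hcase | hcase | hcase
    · exfalso
      obtain ⟨i', hi'k, ε', hε', hp'⟩ := p.right_piece hk e
      have hd' : 0 < p.s (i' + 1) - p.s i' := sub_pos.mpr (p.mono i' hi'k)
      have hc' : 0 < ‖p.x (i' + 1) - p.x i'‖ :=
        norm_pos_iff.mpr (sub_ne_zero.mpr (p.ne i' hi'k).symm)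
      set d' := p.s (i' + 1) - p.s i' with hd'def
      set c' := ‖p.x (i' + 1) - p.x i'‖ with hc'def
      set ε2 := min ε' ((δ - ‖b - x‖) * d' / (2 * c')) with hε2def
      have hε2 : 0 < ε2 := by
        refine lt_min hε' (div_pos (mul_pos (by linarith) hd') (by positivity))
      have hmem2 : e + ε2 ∈ S := by
        rw [hmemS]
        refine ⟨by linarith, fun u hu1 hu2 => ?_⟩
        by_cases hu3 : e ≤ u
        · have hε2a : ε2 ≤ ε' := min_le_left _ _
          have hpu : p.path u = p.F i' u := hp' u hu3 (by linarith)
          have hpe : p.path e = p.F i' e := hp' e le_rfl (by linarith)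
          have hn1 : ‖p.path u - b‖ = ((u - e) / d') * c' := by
            rw [hb, hpu, hpe, Track.F_sub, norm_smul, Real.norm_eq_abs, abs_div,
              abs_of_pos hd', abs_of_nonneg (by linarith : (0:ℝ) ≤ u - e)]
          have hn2 : ‖p.path u - x‖ ≤ ‖p.path u - b‖ + ‖b - x‖ := by
            simpa [sub_add_sub_cancel] using norm_add_le (p.path u - b) (b - x)
          have h1 : (u - e) / d' * c' ≤ ε2 * c' / d' := by
            rw [div_mul_eq_mul_div, div_le_div_iff₀ hd' hd']
            have := mul_le_mul_of_nonneg_right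
              (mul_le_mul_of_nonneg_right (show u - e ≤ ε2 by linarith) hc'.le) hd'.le
            linarith
          have h2 : ε2 * c' / d' ≤ (δ - ‖b - x‖) / 2 := by
            rw [div_le_iff₀ hd']
            have h3 : ε2 ≤ (δ - ‖b - x‖) * d' / (2 * c') := min_le_right _ _
            rw [le_div_iff₀ (by positivity : (0:ℝ) < 2 * c')] at h3
            nlinarith
          rw [hn1] at hn2
          linarith
        · push_neg at hu3
          rw [hnorm u hu1 hu3.le]
          have h1 : (u - s) / (e - s) ≤ 1 := by
            rw [div_le_one hse]
            linarith
          nlinarith [norm_nonneg (b - x)]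
      have := le_csSup hbdd hmem2
      rw [← he] at this
      linarith
    · exact hcase
    · exfalso
      have hbx : (0:ℝ) < ‖b - x‖ := lt_trans hδ0 hcase
      set r := s + δ * (e - s) / ‖b - x‖ with hrdef
      have hr1 : r < e := by
        rw [hrdef]
        have h1 : δ * (e - s) / ‖b - x‖ < e - s := by
          rw [div_lt_iff₀ hbx]
          nlinarith
        linarith
      have hr2 : s < r := by
        rw [hrdef]
        have : 0 < δ * (e - s) / ‖b - x‖ := by positivity
        linarith
      have hb2 := hball r hr2.le hr1
      rw [hnorm r hr2.le hr1.le] at hb2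
      have : (r - s) / (e - s) * ‖b - x‖ = δ := by
        rw [hrdef]
        field_simp
        ring
      linarith
  -- δ' exit point
  set e' := s + δ' / δ * (e - s) with he'def
  have hq : 0 < δ' / δ := by positivity
  have hq1 : δ' / δ ≤ 1 := by
    rw [div_le_one hδ0]; exact hle
  have he'1 : e' ≤ e := by
    rw [he'def]
    nlinarith
  have he'2 : s < e' := by
    rw [he'def]
    nlinarith
  set S' : Set ℝ := {s' | s < s' ∧ p.path '' Set.Icc s s' ⊆ Metric.ball x δ'} with hS'
  have hmemS' : ∀ r : ℝ, r ∈ S' ↔ (s < r ∧ ∀ u, s ≤ u → u ≤ r → ‖p.path u - x‖ < δ') :=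
    fun r => hchar δ' r
  have hS'sub : S' ⊆ S := by
    intro r hr
    rw [hmemS'] at hr
    rw [hmemS]
    exact ⟨hr.1, fun u h1 h2 => lt_of_lt_of_le (hr.2 u h1 h2) hle⟩
  have hkey : δ' * (e - s) = (e' - s) * δ := by
    rw [he'def]
    field_simp
    ring
  have hmid : ∀ r, s < r → r < e' → r ∈ S' := by
    intro r hra hrb
    rw [hmemS']
    refine ⟨hra, fun u hu1 hu2 => ?_⟩
    have hue : u ≤ e := le_trans hu2 (le_trans hrb.le he'1)
    rw [hnorm u hu1 hue, hgoal1]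
    rw [div_mul_eq_mul_div, div_lt_iff₀ hse, hkey]
    nlinarith
  have hmp : ∀ u v : ℝ, u < v → u < (u + v) / 2 ∧ (u + v) / 2 < v :=
    fun u v huv => ⟨by linarith, by linarith⟩
  have hS'ne : S'.Nonempty :=
    ⟨(s + e') / 2, hmid ((s + e') / 2) (hmp s e' he'2).1 (hmp s e' he'2).2⟩
  have hS'bdd : BddAbove S' := hbdd.mono hS'sub
  have hEle : sSup S' ≤ e' := by
    refine csSup_le hS'ne (fun r hr => ?_)
    by_contra hc
    push_neg at hc
    rcases le_or_gt r e with h1 | h1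
    · have hrs : s < r := ((hmemS' r).mp hr).1
      have h2 := ((hmemS' r).mp hr).2 r hrs.le le_rfl
      rw [hnorm r hrs.le h1, hgoal1] at h2
      rw [div_mul_eq_mul_div, div_lt_iff₀ hse, hkey] at h2
      nlinarith
    · have := le_csSup hbdd (hS'sub hr)
      rw [← he] at this
      linarith
  have hEge : e' ≤ sSup S' := by
    by_contra hc
    push_neg at hc
    have h1 : max s (sSup S') < e' := max_lt he'2 hc
    obtain ⟨hr1, hr2⟩ := hmp _ _ h1
    have hrS := hmid _ (lt_of_le_of_lt (le_max_left _ _) hr1) hr2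
    have h3 := le_csSup hS'bdd hrS
    have h4 := lt_of_le_of_lt (le_max_right _ _) hr1
    linarith
  have hE : sSup S' = e' := le_antisymm hEle hEge
  constructor
  · show ‖p.path (sSup S) - x‖ = δ
    rw [← he, ← hb]
    exact hgoal1
  · show p.path (sSup S') = x + (δ' / δ) • (p.path (sSup S) - x)
    rw [hE, ← he, ← hb]
    rw [haff e' he'2.le he'1]
    congr 2
    rw [he'def]
    field_simp
    ring

def dilHomeo (x : Plane) (c : ℝ) (hc : c ≠ 0) : Plane ≃ₜ Plane where
  toFun z := x + c • (z - x)
  invFun z := x + c⁻¹ • (z - x)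
  left_inv z := by
    simp [smul_smul, inv_mul_cancel₀ hc]
  right_inv z := by
    simp [smul_smul, mul_inv_cancel₀ hc]
  continuous_toFun := by
    show Continuous fun z : Plane => x + c • (z - x)
    fun_prop
  continuous_invFun := by
    show Continuous fun z : Plane => x + c⁻¹ • (z - x)
    fun_prop

@[simp] lemma dilHomeo_apply (x : Plane) (c : ℝ) (hc : c ≠ 0) (z : Plane) :
    dilHomeo x c hc z = x + c • (z - x) := rfl

lemma dil_sphere (x : Plane) {δ δ' c : ℝ} (hδ : 0 < δ) (hδ' : 0 < δ') (hc : c = δ' / δ) :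
    (dilHomeo x c (by rw [hc]; positivity)) '' Metric.sphere x δ = Metric.sphere x δ' := by
  have hc0 : 0 < c := by rw [hc]; positivity
  ext w
  constructor
  · rintro ⟨z, hz, rfl⟩
    rw [Metric.mem_sphere, dist_eq_norm] at hz ⊢
    rw [dilHomeo_apply, add_sub_cancel_left, norm_smul, Real.norm_eq_abs, abs_of_pos hc0,
      hz, hc, div_mul_cancel₀ _ hδ.ne']
  · intro hw
    rw [Metric.mem_sphere, dist_eq_norm] at hw
    refine ⟨x + c⁻¹ • (w - x), ?_, ?_⟩
    · rw [Metric.mem_sphere, dist_eq_norm, add_sub_cancel_left, norm_smul, Real.norm_eq_abs,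
        abs_of_pos (inv_pos.mpr hc0), hw, hc]
      field_simp
    · rw [dilHomeo_apply, add_sub_cancel_left, smul_smul, mul_inv_cancel₀ hc0.ne', one_smul]
      abel

lemma Alternates.dilate {x a b c d : Plane} {δ δ' : ℝ} (hδ' : 0 < δ') (hle : δ' ≤ δ)
    (h : Alternates x δ a b c d) :
    Alternates x δ' (x + (δ' / δ) • (a - x)) (x + (δ' / δ) • (b - x))
      (x + (δ' / δ) • (c - x)) (x + (δ' / δ) • (d - x)) := by
  have hδ : 0 < δ := lt_of_lt_of_le hδ' hle
  have hc0 : (0:ℝ) < δ' / δ := by positivity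
  set φ := dilHomeo x (δ' / δ) hc0.ne' with hφ
  obtain ⟨hcmem, hdmem, hne⟩ := h
  have hsph := dil_sphere x hδ hδ' (rfl : δ' / δ = δ' / δ)
  have himg : φ '' (Metric.sphere x δ \ {a, b}) =
      Metric.sphere x δ' \ {x + (δ' / δ) • (a - x), x + (δ' / δ) • (b - x)} := by
    rw [Set.image_diff φ.injective, hsph]
    congr 1
    rw [Set.image_pair]
    rfl
  have hca : φ c ∈ Metric.sphere x δ' \ {x + (δ' / δ) • (a - x), x + (δ' / δ) • (b - x)} := by
    rw [← himg]; exact Set.mem_image_of_mem _ hcmem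
  have hda : φ d ∈ Metric.sphere x δ' \ {x + (δ' / δ) • (a - x), x + (δ' / δ) • (b - x)} := by
    rw [← himg]; exact Set.mem_image_of_mem _ hdmem
  refine ⟨hca, hda, ?_⟩
  intro heq
  apply hne
  have h1 := φ.image_connectedComponentIn hcmem
  have h2 := φ.image_connectedComponentIn hdmem
  rw [himg] at h1 h2
  have h3 : φ '' connectedComponentIn (Metric.sphere x δ \ {a, b}) c =
      φ '' connectedComponentIn (Metric.sphere x δ \ {a, b}) d := by
    rw [h1, h2]
    exact heq
  exact Set.image_eq_image φ.injective |>.mp h3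

theorem crossing_indep_of_radius (p q : Track) (hseg : NoCommonSegment p q)
    (s t : ℝ) (hint : IsInter p q s t) (δ δ' : ℝ)
    (hδ : Admissible p q (p.path s) δ)
    (hδ'pos : 0 < δ') (hlt : δ' < δ) (hδ' : Admissible p q (p.path s) δ')
    (hcross : CrossAt p q s t δ) :
    CrossAt p q s t δ' := by
  obtain ⟨hps0, hpsk, hqt0, hqtk, hpq⟩ := hint
  set x := p.path s with hxdef
  have hVp : ∀ j, j ≤ p.k → p.x j ∈ Metric.ball x δ → p.x j = x := by
    intro j hj hmem
    exact hδ.2 (p.x j) (Or.inl ⟨j, hj, rfl⟩) hmem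
  have hVq : ∀ j, j ≤ q.k → q.x j ∈ Metric.ball x δ → q.x j = x := by
    intro j hj hmem
    exact hδ.2 (q.x j) (Or.inr ⟨j, hj, rfl⟩) hmem
  have hqx : q.path t = x := hpq.symm
  obtain ⟨hpa, hpa'⟩ := entry_spec p s x δ δ' rfl hps0 hpsk hδ'pos hlt.le hVp
  obtain ⟨hpb, hpb'⟩ := exit_spec p s x δ δ' rfl hps0 hpsk hδ'pos hlt.le hVp
  obtain ⟨hqc, hqc'⟩ := entry_spec q t x δ δ' hqx hqt0 hqtk hδ'pos hlt.le hVq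
  obtain ⟨hqd, hqd'⟩ := exit_spec q t x δ δ' hqx hqt0 hqtk hδ'pos hlt.le hVq
  unfold CrossAt at hcross ⊢
  rw [hpa', hpb', hqc', hqd']
  exact hcross.dilate hδ'pos hlt.le

end
end

section
/- Let p and q be tracks. If 𝒱(p) ∩ 𝓛(q) = ∅ or 𝒱(q) ∩ 𝓛(p) = ∅, then range(h_p) and range(h_q) have no common straight line segment. -/
noncomputable section

lemma aux_path_mem_segment (p : Track) (hk : 0 < p.k) {t : ℝ}
    (ht : t ∈ Set.Icc (p.s 0) (p.s p.k)) :
    ∃ i < p.k, p.path t ∈ segment ℝ (p.x i) (p.x (i + 1)) := by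
  set A : Set ℕ := {i | i < p.k ∧ p.s i ≤ t} with hA
  have h0 : 0 ∈ A := ⟨hk, ht.1⟩
  have hbdd : BddAbove A := ⟨p.k, fun i hi => hi.1.le⟩
  have hmem : sSup A ∈ A := Nat.sSup_mem ⟨0, h0⟩ hbdd
  set m := sSup A with hm_def
  have hm : m < p.k := hmem.1
  have hst : p.s m ≤ t := hmem.2
  have hts : t ≤ p.s (m + 1) := by
    rcases eq_or_lt_of_le (Nat.succ_le_of_lt hm) with he | hlt
    · rw [show m + 1 = p.k from he]; exact ht.2
    · by_contra hc
      push_neg at hc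
      have hmem' : m + 1 ∈ A := ⟨hlt, hc.le⟩
      have := le_csSup hbdd hmem'
      omega
  have hss : p.s m < p.s (m + 1) := p.mono m hm
  have hseg : p.seg t = m := rfl
  refine ⟨m, hm, ?_⟩
  rw [segment_eq_image']
  refine ⟨(t - p.s m) / (p.s (m + 1) - p.s m), ⟨?_, ?_⟩, ?_⟩
  · exact div_nonneg (by linarith) (by linarith)
  · exact div_le_one_of_le₀ (by linarith) (by linarith)
  · simp [Track.path, hseg]

lemma aux_segment_subset_line (x y : Plane) : segment ℝ x y ⊆ line x y := by
  rw [line, ← convexHull_pair]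
  exact convexHull_subset_affineSpan _

theorem no_common_segment_of_separation (p q : Track)
    (h : p.V ∩ q.L = ∅ ∨ q.V ∩ p.L = ∅) :
    NoCommonSegment p q := by
  rintro ⟨S, ⟨a, b, hab, rfl⟩, hSp, hSq⟩
  have haS := left_mem_segment ℝ a b
  have hbS := right_mem_segment ℝ a b
  have key : ∀ r : Track, segment ℝ a b ⊆ r.rangeSet → 0 < r.k := by
    intro r hS
    rcases Nat.eq_zero_or_pos r.k with hk | hk
    · exfalso
      obtain ⟨ta, hta, hpa⟩ := hS haS
      obtain ⟨tb, htb, hpb⟩ := hS hbS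
      rw [hk, Set.Icc_self, Set.mem_singleton_iff] at hta htb
      rw [hta] at hpa; rw [htb] at hpb
      exact hab (hpa.symm.trans hpb)
    · exact hk
  have hpk := key p hSp
  have hqk := key q hSq
  have hinf : (segment ℝ a b).Infinite := by
    rw [segment_eq_image']
    apply Set.Infinite.image
    · intro u _ v _ huv
      have h2 : u • (b - a) = v • (b - a) := by
        have := huv
        simpa using this
      have hba : b - a ≠ 0 := sub_ne_zero.2 (Ne.symm hab)
      exact smul_left_injective ℝ hba h2
    · exact Set.Icc_infinite (by norm_num : (0:ℝ) < 1)
  have hsing : ∀ i < p.k, ∀ j < q.k, Set.Subsingleton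
      (segment ℝ (p.x i) (p.x (i + 1)) ∩ segment ℝ (q.x j) (q.x (j + 1))) := by
    intro i hi j hj z hz w hw
    by_contra hzw
    have hzp : z ∈ line (p.x i) (p.x (i + 1)) := aux_segment_subset_line _ _ hz.1
    have hwp : w ∈ line (p.x i) (p.x (i + 1)) := aux_segment_subset_line _ _ hw.1
    have hzq : z ∈ line (q.x j) (q.x (j + 1)) := aux_segment_subset_line _ _ hz.2
    have hwq : w ∈ line (q.x j) (q.x (j + 1)) := aux_segment_subset_line _ _ hw.2
    have hcolp : Collinear ℝ ({z, w, p.x i, p.x (i + 1)} : Set Plane) :=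
      collinear_insert_insert_of_mem_affineSpan_pair hzp hwp
    have hcolq : Collinear ℝ ({z, w, q.x j, q.x (j + 1)} : Set Plane) :=
      collinear_insert_insert_of_mem_affineSpan_pair hzq hwq
    have hpzw : p.x i ∈ affineSpan ℝ ({z, w} : Set Plane) :=
      hcolp.mem_affineSpan_of_mem_of_ne (by simp) (by simp) (by simp) hzw
    have hqzw : q.x j ∈ affineSpan ℝ ({z, w} : Set Plane) :=
      hcolq.mem_affineSpan_of_mem_of_ne (by simp) (by simp) (by simp) hzw
    have hzwq : affineSpan ℝ ({z, w} : Set Plane) ≤ affineSpan ℝ ({q.x j, q.x (j + 1)} : Set Plane) := by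
      apply affineSpan_le.2
      intro u hu
      rcases hu with rfl | hu
      · exact hzq
      · rw [Set.mem_singleton_iff] at hu; subst hu; exact hwq
    have hzwp : affineSpan ℝ ({z, w} : Set Plane) ≤ affineSpan ℝ ({p.x i, p.x (i + 1)} : Set Plane) := by
      apply affineSpan_le.2
      intro u hu
      rcases hu with rfl | hu
      · exact hzp
      · rw [Set.mem_singleton_iff] at hu; subst hu; exact hwp
    have hpq : p.x i ∈ q.L := ⟨j, hj, hzwq hpzw⟩
    have hqp : q.x j ∈ p.L := ⟨i, hi, hzwp hqzw⟩
    rcases h with h | h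
    · exact Set.eq_empty_iff_forall_notMem.1 h (p.x i) ⟨⟨i, hi.le, rfl⟩, hpq⟩
    · exact Set.eq_empty_iff_forall_notMem.1 h (q.x j) ⟨⟨j, hj.le, rfl⟩, hqp⟩
  have hfin : (segment ℝ a b).Finite := by
    have hsub : segment ℝ a b ⊆ ⋃ i ∈ Finset.range p.k, ⋃ j ∈ Finset.range q.k,
        (segment ℝ (p.x i) (p.x (i + 1)) ∩ segment ℝ (q.x j) (q.x (j + 1))) := by
      intro z hz
      obtain ⟨t1, ht1, hz1⟩ := hSp hz
      obtain ⟨t2, ht2, hz2⟩ := hSq hz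
      obtain ⟨i, hi, hzi⟩ := aux_path_mem_segment p hpk ht1
      obtain ⟨j, hj, hzj⟩ := aux_path_mem_segment q hqk ht2
      simp only [Set.mem_iUnion, Finset.mem_range]
      exact ⟨i, hi, j, hj, hz1 ▸ hzi, hz2 ▸ hzj⟩
    refine Set.Finite.subset ?_ hsub
    apply Set.Finite.biUnion (Finset.range p.k).finite_toSet
    intro i hi
    apply Set.Finite.biUnion (Finset.range q.k).finite_toSet
    intro j hj
    exact Set.Subsingleton.finite (hsing i (Finset.mem_range.1 hi) j (Finset.mem_range.1 hj))
  exact hinf hfin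

end
end

section
/- Let p and q be tracks such that range(h_p) and range(h_q) have no common straight line segment. Then the set of intersections of p and q is finite; in particular the number CN(p,q) of crossings of p and q is a well-defined natural number. -/
noncomputable section

/-! ### Auxiliary lemmas -/

lemma TrackAux.f_comb (xi w : Plane) (si d a b s s' : ℝ) (hd : d ≠ 0) (hab : a + b = 1) :
    xi + ((a*s + b*s' - si)/d) • w
      = a • (xi + ((s - si)/d) • w) + b • (xi + ((s' - si)/d) • w) := by
  match_scalars
  · linarith
  · field_simp
    linear_combination si * hab

lemma TrackAux.f_inj (xi w : Plane) (si d : ℝ) (hd : d ≠ 0) (hw : w ≠ 0) {s s' : ℝ}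
    (h : xi + ((s - si)/d) • w = xi + ((s' - si)/d) • w) : s = s' := by
  have h2 : ((s - si)/d) • w = ((s' - si)/d) • w := add_left_cancel h
  have h3 : (s - si)/d = (s' - si)/d := smul_left_injective ℝ hw h2
  field_simp at h3; linarith

lemma TrackAux.s_lt (p : Track) {i j : ℕ} (hij : i < j) (hj : j ≤ p.k) : p.s i < p.s j := by
  induction j with
  | zero => omega
  | succ n ih =>
    have hn : n < p.k := by omega
    have h2 := p.mono n hn
    rcases Nat.lt_succ_iff_lt_or_eq.mp hij with hc | hc
    · exact lt_trans (ih hc (by omega)) h2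
    · subst hc; exact h2

lemma TrackAux.s_le (p : Track) {i j : ℕ} (hij : i ≤ j) (hj : j ≤ p.k) : p.s i ≤ p.s j := by
  rcases eq_or_lt_of_le hij with hc | hc
  · subst hc; exact le_rfl
  · exact (TrackAux.s_lt p hc hj).le

lemma TrackAux.exists_seg (p : Track) {t : ℝ} (h0 : p.s 0 < t) (hk : t < p.s p.k) :
    p.seg t < p.k ∧ p.s (p.seg t) ≤ t ∧ t < p.s (p.seg t + 1) := by
  have hk0 : 0 < p.k := by
    rcases Nat.eq_zero_or_pos p.k with hc | hc
    · rw [hc] at hk; linarith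
    · exact hc
  have h0A : 0 ∈ {i | i < p.k ∧ p.s i ≤ t} := ⟨hk0, le_of_lt h0⟩
  have hbdd : BddAbove {i | i < p.k ∧ p.s i ≤ t} := ⟨p.k, fun j hj => le_of_lt hj.1⟩
  have hmem : p.seg t ∈ {i | i < p.k ∧ p.s i ≤ t} := Nat.sSup_mem ⟨0, h0A⟩ hbdd
  have hsk : p.seg t < p.k := hmem.1
  refine ⟨hsk, hmem.2, ?_⟩
  by_contra hle
  push_neg at hle
  have h1 : p.seg t + 1 < p.k := by
    rcases lt_or_ge (p.seg t + 1) p.k with hc | hc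
    · exact hc
    · have hek : p.k = p.seg t + 1 := by omega
      rw [hek] at hk; linarith
  have h2 : p.seg t + 1 ≤ p.seg t := le_csSup hbdd ⟨h1, hle⟩
  omega

lemma TrackAux.seg_eq (p : Track) {i : ℕ} {u : ℝ} (hik : i < p.k)
    (h1 : p.s i ≤ u) (h2 : u < p.s (i+1)) : p.seg u = i := by
  have hbdd : BddAbove {j | j < p.k ∧ p.s j ≤ u} := ⟨p.k, fun j hj => le_of_lt hj.1⟩
  have hne : Set.Nonempty {j | j < p.k ∧ p.s j ≤ u} := ⟨i, hik, h1⟩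
  have hub : sSup {j | j < p.k ∧ p.s j ≤ u} ≤ i := by
    apply csSup_le hne
    intro j hj
    by_contra hji
    push_neg at hji
    have hle : p.s (i+1) ≤ p.s j := by
      rcases eq_or_lt_of_le (by omega : i + 1 ≤ j) with hc | hc
      · rw [hc]
      · exact (TrackAux.s_lt p hc hj.1.le).le
    linarith [hj.2]
  exact le_antisymm hub (le_csSup ⟨p.k, fun j hj => le_of_lt hj.1⟩ ⟨hik, h1⟩)

lemma TrackAux.path_eq (p : Track) {i : ℕ} {u : ℝ} (hik : i < p.k)
    (h1 : p.s i ≤ u) (h2 : u < p.s (i+1)) :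
    p.path u = p.x i + ((u - p.s i) / (p.s (i+1) - p.s i)) • (p.x (i+1) - p.x i) := by
  unfold Track.path
  rw [TrackAux.seg_eq p hik h1 h2]

lemma TrackAux.combo_Ico {a b s s' lo hi : ℝ} (ha : 0 ≤ a) (hb : 0 ≤ b) (hab : a + b = 1)
    (hs : s ∈ Set.Ico lo hi) (hs' : s' ∈ Set.Ico lo hi) : a*s + b*s' ∈ Set.Ico lo hi := by
  have key : a*hi + b*hi = hi := by linear_combination hi * hab
  have key2 : a*lo + b*lo = lo := by linear_combination lo * hab
  constructor
  · have := mul_le_mul_of_nonneg_left hs.1 ha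
    have := mul_le_mul_of_nonneg_left hs'.1 hb
    linarith
  · rcases eq_or_lt_of_le ha with hc | hc
    · have hb1 : b = 1 := by linarith
      have : a * s = 0 := by rw [← hc]; ring
      rw [this, hb1]; simpa using hs'.2
    · have h1 : a * s < a * hi := mul_lt_mul_of_pos_left hs.2 hc
      have h2 : b * s' ≤ b * hi := mul_le_mul_of_nonneg_left hs'.2.le hb
      linarith

theorem intersections_finite (p q : Track) (h : NoCommonSegment p q) :
    {st : ℝ × ℝ | IsInter p q st.1 st.2}.Finite ∧
    {st : ℝ × ℝ | IsCrossing p q st.1 st.2}.Finite := by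
  -- affine parametrizations of the individual segments
  set fP : ℕ → ℝ → Plane := fun i u =>
    p.x i + ((u - p.s i) / (p.s (i+1) - p.s i)) • (p.x (i+1) - p.x i) with hfP
  set fQ : ℕ → ℝ → Plane := fun j u =>
    q.x j + ((u - q.s j) / (q.s (j+1) - q.s j)) • (q.x (j+1) - q.x j) with hfQ
  set B : ℕ → ℕ → Set (ℝ × ℝ) := fun i j =>
    {st : ℝ × ℝ | st.1 ∈ Set.Ico (p.s i) (p.s (i+1)) ∧
      st.2 ∈ Set.Ico (q.s j) (q.s (j+1)) ∧ fP i st.1 = fQ j st.2} with hB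
  have hBfin : ∀ i < p.k, ∀ j < q.k, (B i j).Finite := by
    intro i hik j hjl
    have hdP : p.s (i+1) - p.s i ≠ 0 := by have := p.mono i hik; linarith
    have hdQ : q.s (j+1) - q.s j ≠ 0 := by have := q.mono j hjl; linarith
    have hwP : p.x (i+1) - p.x i ≠ 0 := sub_ne_zero.mpr (Ne.symm (p.ne i hik))
    have hwQ : q.x (j+1) - q.x j ≠ 0 := sub_ne_zero.mpr (Ne.symm (q.ne j hjl))
    apply Set.Subsingleton.finite
    rintro ⟨s, t⟩ ⟨hsI, htI, hst⟩ ⟨s', t'⟩ ⟨hsI', htI', hst'⟩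
    by_contra hne
    -- first, s ≠ s'
    have hss' : s ≠ s' := by
      intro hss
      subst hss
      have : fQ j t = fQ j t' := by rw [← hst, ← hst']
      have ht : t = t' := TrackAux.f_inj _ _ _ _ hdQ hwQ this
      exact hne (by rw [ht])
    have hfne : fP i s ≠ fP i s' := fun hc => hss' (TrackAux.f_inj _ _ _ _ hdP hwP hc)
    -- the common segment
    apply h
    refine ⟨segment ℝ (fP i s) (fP i s'), ⟨fP i s, fP i s', hfne, rfl⟩, ?_, ?_⟩
    · -- contained in p.rangeSet
      rintro z ⟨a, b, ha, hb, hab, rfl⟩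
      have hz : a • fP i s + b • fP i s' = fP i (a*s + b*s') :=
        (TrackAux.f_comb _ _ _ _ a b s s' hdP hab).symm
      have hu : a*s + b*s' ∈ Set.Ico (p.s i) (p.s (i+1)) :=
        TrackAux.combo_Ico ha hb hab hsI hsI'
      refine ⟨a*s + b*s', ⟨?_, ?_⟩, ?_⟩
      · exact le_trans (TrackAux.s_le p (Nat.zero_le i) hik.le) hu.1
      · exact le_trans hu.2.le (TrackAux.s_le p hik (le_refl p.k))
      · rw [TrackAux.path_eq p hik hu.1 hu.2]; exact hz.symm
    · -- contained in q.rangeSet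
      rintro z ⟨a, b, ha, hb, hab, rfl⟩
      have hz : a • fP i s + b • fP i s' = fQ j (a*t + b*t') := by
        rw [hst, hst']
        exact (TrackAux.f_comb _ _ _ _ a b t t' hdQ hab).symm
      have hu : a*t + b*t' ∈ Set.Ico (q.s j) (q.s (j+1)) :=
        TrackAux.combo_Ico ha hb hab htI htI'
      refine ⟨a*t + b*t', ⟨?_, ?_⟩, ?_⟩
      · exact le_trans (TrackAux.s_le q (Nat.zero_le j) hjl.le) hu.1
      · exact le_trans hu.2.le (TrackAux.s_le q hjl (le_refl q.k))
      · rw [TrackAux.path_eq q hjl hu.1 hu.2]; exact hz.symm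
  have hsub : {st : ℝ × ℝ | IsInter p q st.1 st.2} ⊆
      ⋃ i ∈ Finset.range p.k, ⋃ j ∈ Finset.range q.k, B i j := by
    rintro ⟨s, t⟩ ⟨h1, h2, h3, h4, h5⟩
    obtain ⟨hik, hi1, hi2⟩ := TrackAux.exists_seg p h1 h2
    obtain ⟨hjl, hj1, hj2⟩ := TrackAux.exists_seg q h3 h4
    simp only [Set.mem_iUnion, Finset.mem_range]
    refine ⟨p.seg s, hik, q.seg t, hjl, ⟨hi1, hi2⟩, ⟨hj1, hj2⟩, ?_⟩
    show fP (p.seg s) s = fQ (q.seg t) t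
    have e1 : p.path s = fP (p.seg s) s := TrackAux.path_eq p hik hi1 hi2
    have e2 : q.path t = fQ (q.seg t) t := TrackAux.path_eq q hjl hj1 hj2
    rw [← e1, ← e2]
    exact h5
  have key : {st : ℝ × ℝ | IsInter p q st.1 st.2}.Finite := by
    apply Set.Finite.subset ?_ hsub
    apply Set.Finite.biUnion (Finset.range p.k).finite_toSet
    intro i hi
    apply Set.Finite.biUnion (Finset.range q.k).finite_toSet
    intro j hj
    exact hBfin i (Finset.mem_range.mp hi) j (Finset.mem_range.mp hj)
  exact ⟨key, key.subset fun st hst => hst.1⟩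

end
end

section
/- Let p = ((s₀,x₀),(s₁,x₁),…,(s_k,x_k)) be a track and let q and q' be tracks. Then for every δ > 0 there exists a track p̄ = ((s₀,y₀),(s₁,y₁),…,(s_k,y_k)) (with the same parameter values sᵢ) such that p̄ ⋈ q, p̄ ⋈ q' and ‖xᵢ − yᵢ‖ < δ for all 0 ≤ i ≤ k. -/
noncomputable section

open MeasureTheory in
lemma wsp_line_ne_top (x y : Plane) : affineSpan ℝ ({x, y} : Set Plane) ≠ ⊤ := by
  intro h
  have hd : (affineSpan ℝ ({x, y} : Set Plane)).direction = ⊤ := by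
    rw [h, AffineSubspace.direction_top]
  rw [direction_affineSpan, vectorSpan_pair] at hd
  have h1 : Module.finrank ℝ (ℝ ∙ (x -ᵥ y)) ≤ 1 := by
    rcases eq_or_ne (x -ᵥ y) (0 : Plane) with h0 | h0
    · rw [h0, Submodule.span_zero_singleton]; simp
    · rw [finrank_span_singleton h0]
  rw [hd] at h1
  have : Module.finrank ℝ Plane = 2 := finrank_euclideanSpace_fin
  rw [finrank_top] at h1
  omega

open MeasureTheory in
lemma wsp_vol_line (x y : Plane) : volume (line x y) = 0 :=
  Measure.addHaar_affineSubspace _ _ (wsp_line_ne_top x y)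

open MeasureTheory in
lemma wsp_exists_avoid (c : Plane) (δ : ℝ) (hδ : 0 < δ) (S : Set Plane)
    (hS : volume S = 0) : ∃ w ∈ Metric.ball c δ, w ∉ S := by
  by_contra h
  push_neg at h
  have hsub : Metric.ball c δ ⊆ S := fun w hw => h w hw
  have := measure_mono_null hsub hS
  exact (Metric.measure_ball_pos volume c hδ).ne' this

lemma wsp_mem_line_left (a b : Plane) : a ∈ line a b :=
  left_mem_affineSpan_pair ℝ a b

lemma wsp_mem_line_swap {z w v : Plane} (hvz : v ≠ z) (hv : v ∈ line z w) :
    w ∈ line z v := by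
  have h1 : (v -ᵥ z) +ᵥ z ∈ line[ℝ, z, w] := by simpa [line] using hv
  rw [vadd_left_mem_affineSpan_pair] at h1
  obtain ⟨r, hr⟩ := h1
  have hr0 : r ≠ 0 := by
    rintro rfl; simp at hr; exact hvz (sub_eq_zero.mp hr.symm)
  have h2 : (r⁻¹ • (v -ᵥ z)) +ᵥ z ∈ line[ℝ, z, v] := by
    rw [vadd_left_mem_affineSpan_pair]; exact ⟨r⁻¹, rfl⟩
  have hw : (r⁻¹ • (v -ᵥ z)) +ᵥ z = w := by
    rw [← hr, smul_smul, inv_mul_cancel₀ hr0, one_smul]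
    simp
  rwa [hw] at h2

open MeasureTheory in
lemma wsp_avoid (q q' : Track) (z c : Plane) (δ : ℝ) (hδ : 0 < δ) :
    ∃ w ∈ Metric.ball c δ, w ∉ q.L ∧ w ∉ q'.L ∧ w ∉ q.V ∧ w ∉ q'.V ∧ w ≠ z ∧
      ∀ v, (v ∈ q.V ∨ v ∈ q'.V) → v ≠ z → v ∉ line z w := by
  set T : Set Plane := ⋃ (i : ℕ),
    (line (q.x i) (q.x (i+1)) ∪ line (q'.x i) (q'.x (i+1)) ∪ line (q.x i) (q.x i) ∪
      line (q'.x i) (q'.x i) ∪ line z z ∪ line z (q.x i) ∪ line z (q'.x i)) with hTdef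
  have hT : volume T = 0 := by
    refine measure_iUnion_null fun i => ?_
    simp only [measure_union_null_iff]
    refine ⟨⟨⟨⟨⟨⟨?_, ?_⟩, ?_⟩, ?_⟩, ?_⟩, ?_⟩, ?_⟩ <;> exact wsp_vol_line _ _
  obtain ⟨w, hw, hwT⟩ := wsp_exists_avoid c δ hδ T hT
  have hmem : ∀ (i : ℕ) (A : Set Plane), w ∈ A →
      (A = line (q.x i) (q.x (i+1)) ∨ A = line (q'.x i) (q'.x (i+1)) ∨
       A = line (q.x i) (q.x i) ∨ A = line (q'.x i) (q'.x i) ∨ A = line z z ∨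
       A = line z (q.x i) ∨ A = line z (q'.x i)) → False := by
    intro i A hwA hA
    refine hwT (Set.mem_iUnion.mpr ⟨i, ?_⟩)
    simp only [Set.mem_union]
    rcases hA with h|h|h|h|h|h|h <;> subst h <;> tauto
  refine ⟨w, hw, ?_, ?_, ?_, ?_, ?_, ?_⟩
  · rintro ⟨i, hik, hm⟩
    exact hmem i _ hm (Or.inl rfl)
  · rintro ⟨i, hik, hm⟩
    exact hmem i _ hm (Or.inr (Or.inl rfl))
  · rintro ⟨i, hik, rfl⟩
    exact hmem i _ (wsp_mem_line_left _ _) (Or.inr (Or.inr (Or.inl rfl)))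
  · rintro ⟨i, hik, rfl⟩
    exact hmem i _ (wsp_mem_line_left _ _) (Or.inr (Or.inr (Or.inr (Or.inl rfl))))
  · rintro rfl
    exact hmem 0 _ (wsp_mem_line_left _ _) (by tauto)
  · rintro v hv hvz hm
    have hwl : w ∈ line z v := wsp_mem_line_swap hvz hm
    rcases hv with ⟨i, hik, rfl⟩ | ⟨i, hik, rfl⟩
    · exact hmem i _ hwl (by tauto)
    · exact hmem i _ hwl (by tauto)

def wspPick (q q' : Track) (δ : ℝ) (hδ : 0 < δ) (z c : Plane) : Plane :=
  (wsp_avoid q q' z c δ hδ).choose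

lemma wspPick_spec (q q' : Track) (δ : ℝ) (hδ : 0 < δ) (z c : Plane) :
    wspPick q q' δ hδ z c ∈ Metric.ball c δ ∧ wspPick q q' δ hδ z c ∉ q.L ∧
    wspPick q q' δ hδ z c ∉ q'.L ∧ wspPick q q' δ hδ z c ∉ q.V ∧
    wspPick q q' δ hδ z c ∉ q'.V ∧ wspPick q q' δ hδ z c ≠ z ∧
    ∀ v, (v ∈ q.V ∨ v ∈ q'.V) → v ≠ z → v ∉ line z (wspPick q q' δ hδ z c) := by
  obtain ⟨h1, h2⟩ := (wsp_avoid q q' z c δ hδ).choose_spec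
  exact ⟨h1, h2⟩

def wspSeq (p q q' : Track) (δ : ℝ) (hδ : 0 < δ) : ℕ → Plane
  | 0 => wspPick q q' δ hδ (p.x 0) (p.x 0)
  | n + 1 => wspPick q q' δ hδ (wspSeq p q q' δ hδ n) (p.x (n + 1))

theorem weakly_separated_perturbation (p q q' : Track) (δ : ℝ) (hδ : 0 < δ) :
    ∃ pbar : Track, pbar.k = p.k ∧ (∀ i ≤ p.k, pbar.s i = p.s i) ∧
      WSep pbar q ∧ WSep pbar q' ∧ ∀ i ≤ p.k, ‖p.x i - pbar.x i‖ < δ := by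
  set y : ℕ → Plane := wspSeq p q q' δ hδ with hy
  have hspec : ∀ n : ℕ, y n ∈ Metric.ball (p.x n) δ ∧ y n ∉ q.L ∧ y n ∉ q'.L ∧
      y n ∉ q.V ∧ y n ∉ q'.V := by
    intro n
    cases n with
    | zero =>
      obtain ⟨h1, h2, h3, h4, h5, _⟩ := wspPick_spec q q' δ hδ (p.x 0) (p.x 0)
      exact ⟨h1, h2, h3, h4, h5⟩
    | succ n =>
      obtain ⟨h1, h2, h3, h4, h5, _⟩ := wspPick_spec q q' δ hδ (y n) (p.x (n + 1))
      exact ⟨h1, h2, h3, h4, h5⟩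
  have hsucc : ∀ n : ℕ, y (n + 1) ≠ y n ∧
      ∀ v, (v ∈ q.V ∨ v ∈ q'.V) → v ≠ y n → v ∉ line (y n) (y (n + 1)) := by
    intro n
    obtain ⟨_, _, _, _, _, h6, h7⟩ := wspPick_spec q q' δ hδ (y n) (p.x (n + 1))
    exact ⟨h6, h7⟩
  refine ⟨⟨p.k, p.s, y, p.mono, fun i _ => ((hsucc i).1).symm⟩, rfl, fun i _ => rfl,
    ?_, ?_, ?_⟩
  · constructor
    · ext z
      simp only [Set.mem_inter_iff, Set.mem_empty_iff_false, iff_false]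
      rintro ⟨⟨i, hik, rfl⟩, hzL⟩
      exact (hspec i).2.1 hzL
    · ext v
      simp only [Set.mem_inter_iff, Set.mem_empty_iff_false, iff_false]
      rintro ⟨hvV, i, hik, hvl⟩
      have hvne : v ≠ y i := fun h => (hspec i).2.2.2.1 (h ▸ hvV)
      exact (hsucc i).2 v (Or.inl hvV) hvne hvl
  · constructor
    · ext z
      simp only [Set.mem_inter_iff, Set.mem_empty_iff_false, iff_false]
      rintro ⟨⟨i, hik, rfl⟩, hzL⟩
      exact (hspec i).2.2.1 hzL
    · ext v
      simp only [Set.mem_inter_iff, Set.mem_empty_iff_false, iff_false]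
      rintro ⟨hvV, i, hik, hvl⟩
      have hvne : v ≠ y i := fun h => (hspec i).2.2.2.2 (h ▸ hvV)
      exact (hsucc i).2 v (Or.inr hvV) hvne hvl
  · intro i _
    have := (hspec i).1
    rw [Metric.mem_ball, dist_comm] at this
    rw [← dist_eq_norm]
    exact this


end
end

section
/- Let f : [−1;2] → ℝ² be continuous with modulus of uniform continuity md, let I = [a_I;b_I] ⊆ [−1;2] be a closed interval, and let p = ((s₀,x₀),…,(s_k,x_k)) be an n-approximation of f|_I. Then for all 0 ≤ i < k, ‖xᵢ − xᵢ₊₁‖ < 3·2⁻ⁿ, and for all s ∈ [a_I;b_I], ‖f(s) − h_p(s)‖ < 5·2⁻ⁿ. -/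
noncomputable section

theorem approximation_estimates (f : ℝ → Plane) (md : ℕ → ℕ)
    (hf : ContinuousOn f (Set.Icc (-1:ℝ) 2)) (hmd : IsModulus1 f md)
    (aI bI : ℝ) (hIab : aI ≤ bI) (hI : Set.Icc aI bI ⊆ Set.Icc (-1:ℝ) 2)
    (n : ℕ) (p : Track) (hp : IsApprox f md aI bI n p) :
    (∀ i < p.k, ‖p.x i - p.x (i + 1)‖ < 3 * (2:ℝ) ^ (-(n : ℤ))) ∧
    (∀ s ∈ Set.Icc aI bI, ‖f s - p.path s‖ < 5 * (2:ℝ) ^ (-(n : ℤ))) := by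
  obtain ⟨h0, hkk, hstep, hclose⟩ := hp
  have hpos : (0:ℝ) < (2:ℝ) ^ (-(n : ℤ)) := by positivity
  have hsmono : ∀ i j, i ≤ j → j ≤ p.k → p.s i ≤ p.s j := by
    intro i j hij hjk
    induction j with
    | zero => simp [Nat.le_zero.mp hij]
    | succ m ih =>
      rcases Nat.lt_succ_iff_lt_or_eq.mp (Nat.lt_succ_of_le hij) with h | h
      · exact le_trans (ih (Nat.lt_succ_iff.mp h) (le_trans (Nat.le_succ m) hjk))
          (le_of_lt (p.mono m (Nat.lt_of_succ_le hjk)))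
      · simp [h]
  have hsIcc : ∀ i ≤ p.k, p.s i ∈ Set.Icc aI bI := by
    intro i hi
    exact ⟨h0 ▸ hsmono 0 i (Nat.zero_le _) hi, hkk ▸ hsmono i p.k hi le_rfl⟩
  have hA : ∀ i < p.k, ‖p.x i - p.x (i + 1)‖ < 3 * (2:ℝ) ^ (-(n : ℤ)) := by
    intro i hi
    have hi1 : p.s i ∈ Set.Icc (-1:ℝ) 2 := hI (hsIcc i hi.le)
    have hi2 : p.s (i+1) ∈ Set.Icc (-1:ℝ) 2 := hI (hsIcc (i+1) hi)
    have habs : |p.s i - p.s (i+1)| < (2:ℝ) ^ (-(md n : ℤ)) := by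
      rw [abs_sub_comm, abs_of_nonneg (by linarith [p.mono i hi])]
      exact hstep i hi
    have hmid : ‖f (p.s i) - f (p.s (i+1))‖ < (2:ℝ) ^ (-(n : ℤ)) :=
      hmd.2 n _ hi1 _ hi2 habs
    have h1 := hclose i hi.le
    have h2 := hclose (i+1) hi
    have ht : ‖p.x i - p.x (i+1)‖ ≤
        ‖p.x i - f (p.s i)‖ + ‖f (p.s i) - f (p.s (i+1))‖ + ‖f (p.s (i+1)) - p.x (i+1)‖ := by
      have := dist_triangle4 (p.x i) (f (p.s i)) (f (p.s (i+1))) (p.x (i+1))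
      simpa [dist_eq_norm] using this
    rw [norm_sub_rev] at h1
    linarith
  refine ⟨hA, ?_⟩
  intro s hs
  by_cases hk0 : p.k = 0
  · have hseq : s = p.s 0 := by
      have := hs.1; have := hs.2
      have hb : bI = p.s 0 := by rw [← hkk, hk0]
      rw [h0]; linarith [hs.1, hb ▸ hs.2]
    have hempty : {i | i < p.k ∧ p.s i ≤ s} = ∅ := by
      ext i; simp [hk0]
    have hseg : p.seg s = 0 := by
      rw [Track.seg, hempty]
      simp
    rw [Track.path, hseg]
    rw [← hseq]
    simp only [sub_self, zero_div, zero_smul, add_zero]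
    have := hclose 0 (Nat.zero_le _)
    rw [← hseq] at this
    linarith
  · have hk1 : 0 < p.k := Nat.pos_of_ne_zero hk0
    set T := {i | i < p.k ∧ p.s i ≤ s} with hT
    have h0T : 0 ∈ T := ⟨hk1, h0 ▸ hs.1⟩
    have hbdd : BddAbove T := ⟨p.k, fun i hi => hi.1.le⟩
    have hjmem : p.seg s ∈ T := Nat.sSup_mem ⟨0, h0T⟩ hbdd
    set j := p.seg s with hjdef
    have hjk : j < p.k := hjmem.1
    have hjs : p.s j ≤ s := hjmem.2
    have hsj1 : s ≤ p.s (j+1) := by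
      by_cases hje : j + 1 = p.k
      · rw [hje, hkk]; exact hs.2
      · by_contra hcon
        push_neg at hcon
        have : j + 1 ∈ T := ⟨lt_of_le_of_ne (Nat.succ_le_of_lt hjk) hje, hcon.le⟩
        have hle : j + 1 ≤ j := le_csSup hbdd this
        omega
    have hd : (0:ℝ) < p.s (j+1) - p.s j := by linarith [p.mono j hjk]
    set θ := (s - p.s j) / (p.s (j+1) - p.s j) with hθ
    have hθ0 : 0 ≤ θ := div_nonneg (by linarith) hd.le
    have hθ1 : θ ≤ 1 := by
      rw [hθ, div_le_one hd]; linarith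
    have hfsj : ‖f s - f (p.s j)‖ < (2:ℝ) ^ (-(n : ℤ)) := by
      apply hmd.2 n s (hI hs) _ (hI (hsIcc j hjk.le))
      rw [abs_of_nonneg (by linarith)]
      linarith [hstep j hjk]
    have hxj := hclose j hjk.le
    have hΔ := hA j hjk
    have hpath : p.path s = p.x j + θ • (p.x (j+1) - p.x j) := by
      rw [Track.path, ← hjdef, ← hθ]
    rw [hpath]
    have hexp : f s - (p.x j + θ • (p.x (j+1) - p.x j)) =
        (f s - p.x j) - θ • (p.x (j+1) - p.x j) := by abel
    rw [hexp]
    have hT1 : ‖(f s - p.x j) - θ • (p.x (j+1) - p.x j)‖ ≤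
        ‖f s - p.x j‖ + ‖θ • (p.x (j+1) - p.x j)‖ := norm_sub_le _ _
    have hT2 : ‖f s - p.x j‖ ≤ ‖f s - f (p.s j)‖ + ‖f (p.s j) - p.x j‖ := by
      have := norm_sub_le_norm_sub_add_norm_sub (f s) (f (p.s j)) (p.x j)
      exact this
    have hT3 : ‖θ • (p.x (j+1) - p.x j)‖ ≤ ‖p.x (j+1) - p.x j‖ := by
      rw [norm_smul, Real.norm_eq_abs, abs_of_nonneg hθ0]
      nlinarith [norm_nonneg (p.x (j+1) - p.x j)]
    have hrev : ‖p.x (j+1) - p.x j‖ < 3 * (2:ℝ) ^ (-(n : ℤ)) := by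
      rw [norm_sub_rev]; exact hΔ
    linarith

end
end
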